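/- Define G : ℝ → ℝ by G(h) = sgn(h − h*)·((2/3)h√h − 2h*√h + (4/3)h*√h*) for h > 0 and G(h) = −(4/3)h*√h* + h for h ≤ 0, where h* > 0 is a constant. Then G is continuous on ℝ, continuously differentiable on (−∞,0) ∪ (0,+∞), strictly increasing, and hence admits a globally defined inverse G^{-1} : ℝ → ℝ. -/

import Mathlib

open Real Set Filter

set_option maxHeartbeats 1000000 in
/-- The function `G` of Lemma 1 is continuous on `ℝ`, continuously differentiable away
from `0`, strictly increasing, and bijective (hence has a global inverse `G⁻¹ : ℝ → ℝ`). -/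
theorem G_properties (hstar : ℝ) (hh : 0 < hstar) (G : ℝ → ℝ)
    (hG : G = fun h => if 0 < h then
        Real.sign (h - hstar) *
          ((2 / 3) * h * Real.sqrt h - 2 * hstar * Real.sqrt h
            + (4 / 3) * hstar * Real.sqrt hstar)
      else -(4 / 3) * hstar * Real.sqrt hstar + h) :
    Continuous G ∧ ContDiffOn ℝ 1 G {x : ℝ | x ≠ 0} ∧ StrictMono G ∧
      Function.Bijective G := by
  set a : ℝ := Real.sqrt hstar with ha
  have ha0 : 0 < a := Real.sqrt_pos.mpr hh
  have haa : a * a = hstar := Real.mul_self_sqrt hh.le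
  set c : ℝ := (4 / 3) * hstar * a with hc
  set φ : ℝ → ℝ := fun h => (2 / 3) * h * Real.sqrt h - 2 * hstar * Real.sqrt h + c with hφ
  have hφstar : φ hstar = 0 := by
    simp only [hφ, hc, ← ha]; ring
  have hφ0 : φ 0 = c := by simp [hφ, Real.sqrt_zero]
  -- piecewise descriptions
  have e1 : ∀ h : ℝ, h ≤ 0 → G h = -c + h := by
    intro h hle
    simp only [hG, hc, not_lt.mpr hle, if_false, ← ha]
    ring
  have e2 : ∀ h ∈ Icc (0 : ℝ) hstar, G h = -(φ h) := by
    intro h hmem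
    rcases eq_or_lt_of_le hmem.1 with h0 | h0
    · rw [e1 h (le_of_eq h0.symm), ← h0, hφ0]; ring
    · rcases eq_or_lt_of_le hmem.2 with hH | hH
      · simp only [hG, if_pos h0, hH, sub_self, Real.sign_zero, zero_mul]
        rw [if_pos hh, hφstar]; ring
      · have : Real.sign (h - hstar) = -1 := Real.sign_of_neg (by linarith)
        simp only [hG, if_pos h0, this, hφ, hc, ← ha]
        ring
  have e3 : ∀ h ∈ Ici hstar, G h = φ h := by
    intro h hmem
    rcases eq_or_lt_of_le (show hstar ≤ h from hmem) with hH | hH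
    · simp only [hG, if_pos (lt_of_lt_of_le hh hmem), ← hH, sub_self, Real.sign_zero, zero_mul]
      rw [if_pos hh, hφstar]
    · have : Real.sign (h - hstar) = 1 := Real.sign_of_pos (by linarith)
      simp only [hG, if_pos (lt_of_lt_of_le hh hmem), this, hφ, hc, ← ha]
      ring
  have hφc : Continuous φ := by
    apply Continuous.add
    · exact ((continuous_const.mul continuous_id).mul Real.continuous_sqrt).sub
        (continuous_const.mul Real.continuous_sqrt)
    · exact continuous_const
  -- continuity
  have hGF : G = fun h : ℝ => if h ≤ 0 then -c + h else if h ≤ hstar then -(φ h) else φ h := by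
    funext h
    by_cases h0 : h ≤ 0
    · rw [if_pos h0, e1 h h0]
    · rw [if_neg h0]
      push_neg at h0
      by_cases h1 : h ≤ hstar
      · rw [if_pos h1, e2 h ⟨h0.le, h1⟩]
      · push_neg at h1
        rw [if_neg (not_le.mpr h1), e3 h (le_of_lt h1)]
  have hGcont : Continuous G := by
    rw [hGF]
    apply Continuous.if_le
    · exact continuous_const.add continuous_id
    · apply Continuous.if_le hφc.neg hφc continuous_id continuous_const
      intro x hx
      simp only [id] at hx
      rw [hx, Pi.neg_apply, hφstar]; ring
    · exact continuous_id
    · exact continuous_const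
    · intro x hx
      rw [hx, if_pos hh.le, hφ0]
      ring
  -- derivative of φ
  have hd : ∀ x : ℝ, 0 < x → HasDerivAt φ ((x - hstar) / Real.sqrt x) x := by
    intro x hx
    have hsx : (0:ℝ) < Real.sqrt x := Real.sqrt_pos.mpr hx
    have hs : HasDerivAt Real.sqrt (1 / (2 * Real.sqrt x)) x := Real.hasDerivAt_sqrt (ne_of_gt hx)
    have h1 : HasDerivAt (fun h : ℝ => h * Real.sqrt h)
        (1 * Real.sqrt x + x * (1 / (2 * Real.sqrt x))) x := (hasDerivAt_id x).mul hs
    have h2 : HasDerivAt φ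
        ((2/3) * (1 * Real.sqrt x + x * (1 / (2 * Real.sqrt x))) - 2 * hstar * (1 / (2 * Real.sqrt x)) + 0) x := by
      refine HasDerivAt.add ?_ (hasDerivAt_const _ _)
      have := ((h1.const_mul (2/3 : ℝ)).sub (hs.const_mul (2 * hstar)))
      convert this using 2
      simp only [Pi.sub_apply]; ring
    convert h2 using 1
    have hxx : Real.sqrt x * Real.sqrt x = x := Real.mul_self_sqrt hx.le
    field_simp
    nlinarith [hxx]
  -- strict monotonicity
  have s2 : StrictMonoOn (fun h => -(φ h)) (Icc (0:ℝ) hstar) := by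
    apply strictMonoOn_of_deriv_pos (convex_Icc _ _) hφc.neg.continuousOn
    intro x hx
    rw [interior_Icc] at hx
    rw [((hd x hx.1).neg).deriv]
    have hsx : (0:ℝ) < Real.sqrt x := Real.sqrt_pos.mpr hx.1
    have h' : -((x - hstar) / Real.sqrt x) = (hstar - x) / Real.sqrt x := by ring
    rw [h']
    exact div_pos (by linarith [hx.2]) hsx
  have s3 : StrictMonoOn φ (Ici hstar) := by
    apply strictMonoOn_of_deriv_pos (convex_Ici _) hφc.continuousOn
    intro x hx
    rw [interior_Ici] at hx
    have hx' : hstar < x := hx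
    have hx0 : 0 < x := lt_trans hh hx'
    rw [(hd x hx0).deriv]
    exact div_pos (by linarith) (Real.sqrt_pos.mpr hx0)
  have m1 : StrictMonoOn G (Iic (0:ℝ)) := by
    intro x hx y hy hxy
    rw [e1 x hx, e1 y hy]; linarith
  have m2 : StrictMonoOn G (Icc (0:ℝ) hstar) := by
    intro x hx y hy hxy
    rw [e2 x hx, e2 y hy]; exact s2 hx hy hxy
  have m3 : StrictMonoOn G (Ici hstar) := by
    intro x hx y hy hxy
    rw [e3 x hx, e3 y hy]; exact s3 hx hy hxy
  have m12 : StrictMonoOn G (Iic (0:ℝ) ∪ Icc (0:ℝ) hstar) :=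
    m1.union m2 isGreatest_Iic (isLeast_Icc hh.le)
  rw [Iic_union_Icc_eq_Iic hh.le] at m12
  have m123 : StrictMonoOn G (Iic hstar ∪ Ici hstar) :=
    m12.union m3 isGreatest_Iic isLeast_Ici
  rw [Iic_union_Ici] at m123
  have hmono : StrictMono G := strictMonoOn_univ.mp m123
  -- C¹ away from 0
  set q : ℝ → ℝ := fun x => x * |x| with hq
  have hqd : ∀ x : ℝ, HasDerivAt q (2 * |x|) x := by
    intro x
    rcases lt_trichotomy x 0 with hx | hx | hx
    · have heq : q =ᶠ[nhds x] fun y => -(y * y) := by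
        filter_upwards [Iio_mem_nhds hx] with y hy
        have hy' : |y| = -y := abs_of_neg (Set.mem_Iio.mp hy)
        simp only [hq, hy']
        ring
      have hder : HasDerivAt (fun y : ℝ => -(y * y)) (2 * |x|) x := by
        have := ((hasDerivAt_id x).mul (hasDerivAt_id x)).neg
        refine this.congr_deriv ?_
        rw [abs_of_neg hx]; simp only [id]; ring
      exact hder.congr_of_eventuallyEq heq
    · subst hx
      rw [hasDerivAt_iff_tendsto_slope]
      have habs : Filter.Tendsto (fun y : ℝ => |y|) (nhdsWithin 0 {(0:ℝ)}ᶜ) (nhds (2 * |(0:ℝ)|)) := by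
        have := (continuous_abs.tendsto (0:ℝ)).mono_left
          (nhdsWithin_le_nhds (s := {(0:ℝ)}ᶜ))
        simpa using this
      apply habs.congr'
      filter_upwards [self_mem_nhdsWithin] with y hy
      have hy0 : y ≠ 0 := hy
      simp [slope, hq, hy0, mul_comm]
    · have heq : q =ᶠ[nhds x] fun y => y * y := by
        filter_upwards [Ioi_mem_nhds hx] with y hy
        simp only [hq, abs_of_pos (Set.mem_Ioi.mp hy)]
      have hder : HasDerivAt (fun y : ℝ => y * y) (2 * |x|) x := by
        have := (hasDerivAt_id x).mul (hasDerivAt_id x)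
        refine this.congr_deriv ?_
        rw [abs_of_pos hx]; simp only [id]; ring
      exact hder.congr_of_eventuallyEq heq
  have hqC1 : ContDiff ℝ 1 q := by
    rw [contDiff_one_iff_deriv]
    constructor
    · exact fun x => (hqd x).differentiableAt
    · have : deriv q = fun x => 2 * |x| := funext fun x => (hqd x).deriv
      rw [this]
      exact continuous_const.mul continuous_abs
  set Ψ : ℝ → ℝ := fun h => (2 / 3) * q (Real.sqrt h - a) * (Real.sqrt h + 2 * a) with hΨ
  have eΨ : ∀ h : ℝ, 0 < h → G h = Ψ h := by
    intro h hpos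
    have huu : Real.sqrt h * Real.sqrt h = h := Real.mul_self_sqrt hpos.le
    rcases lt_trichotomy h hstar with hlt | heq | hgt
    · have hu : Real.sqrt h < a := Real.sqrt_lt_sqrt hpos.le hlt
      rw [e2 h ⟨hpos.le, hlt.le⟩]
      simp only [hΨ, hq, abs_of_neg (show Real.sqrt h - a < 0 by linarith), hφ, hc]
      nlinarith [huu, haa]
    · subst heq
      rw [e3 h Set.self_mem_Ici, hφstar]
      simp [hΨ, hq, ← ha]
    · have hu : a < Real.sqrt h := Real.sqrt_lt_sqrt hh.le hgt
      rw [e3 h hgt.le]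
      simp only [hΨ, hq, abs_of_pos (show 0 < Real.sqrt h - a by linarith), hφ, hc]
      nlinarith [huu, haa]
  have hcd : ContDiffOn ℝ 1 G {x : ℝ | x ≠ 0} := by
    intro x hx
    have hx' : (x : ℝ) ≠ 0 := hx
    rcases hx'.lt_or_gt with hneg | hpos
    · have heq : G =ᶠ[nhds x] fun h => -c + h := by
        filter_upwards [Iio_mem_nhds hneg] with y hy
        exact e1 y (le_of_lt hy)
      have : ContDiffAt ℝ 1 G x :=
        ((contDiff_const.add contDiff_id).contDiffAt).congr_of_eventuallyEq heq
      exact this.contDiffWithinAt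
    · have heq : G =ᶠ[nhds x] Ψ := by
        filter_upwards [Ioi_mem_nhds hpos] with y hy
        exact eΨ y hy
      have hs : ContDiffAt ℝ 1 Real.sqrt x := Real.contDiffAt_sqrt (ne_of_gt hpos)
      have hΨc : ContDiffAt ℝ 1 Ψ x := by
        apply ContDiffAt.mul
        · exact contDiffAt_const.mul ((hqC1.contDiffAt).comp x (hs.sub contDiffAt_const))
        · exact hs.add contDiffAt_const
      exact (hΨc.congr_of_eventuallyEq heq).contDiffWithinAt
  -- surjectivity
  have htop : Filter.Tendsto G Filter.atTop Filter.atTop := by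
    apply Filter.tendsto_atTop_mono' Filter.atTop
      (show ∀ᶠ h in Filter.atTop, (4/9 : ℝ) * h + c ≤ G h from ?_)
    · exact Filter.tendsto_atTop_add_const_right _ c
        (Filter.Tendsto.const_mul_atTop (by norm_num) Filter.tendsto_id)
    · filter_upwards [Filter.eventually_ge_atTop (max (9 * hstar) 1)] with h hge
      have h9 : 9 * hstar ≤ h := le_trans (le_max_left _ _) hge
      have h1 : (1:ℝ) ≤ h := le_trans (le_max_right _ _) hge
      have hs1 : (1:ℝ) ≤ Real.sqrt h := by
        rw [show (1:ℝ) = Real.sqrt 1 by simp]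
        exact Real.sqrt_le_sqrt h1
      rw [e3 h (Set.mem_Ici.mpr (by linarith))]
      simp only [hφ, hc]
      have hfac : (0:ℝ) ≤ 2/3*h - 2*hstar := by linarith
      have key : (2/3*h - 2*hstar) * 1 ≤ (2/3*h - 2*hstar) * Real.sqrt h :=
        mul_le_mul_of_nonneg_left hs1 hfac
      nlinarith [key]
  have hbot : Filter.Tendsto G Filter.atBot Filter.atBot := by
    have heq : G =ᶠ[Filter.atBot] fun h => -c + h := by
      filter_upwards [Filter.eventually_le_atBot (0:ℝ)] with h hle
      exact e1 h hle
    exact (Filter.tendsto_atBot_add_const_left _ (-c) Filter.tendsto_id).congr'  heq.symm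
  exact ⟨hGcont, hcd, hmono, hmono.injective, hGcont.surjective htop hbot⟩
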